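/- arXiv:2307.13304 — 3 statements merged into one kernel-verified Lean document; each statement's English description precedes it below -/
import Mathlib

section
/- Let H ∈ ℝ^{n×n} be a μ-incoherent positive semidefinite symmetric matrix and let H = (Ù + I)D(Ù + I)^T be its LDL decomposition, where Ù is strictly upper triangular and D is a nonnegative diagonal matrix. Then tr(D) ≤ (μ²/n)·tr(H^{1/2})². -/
open Matrix

/-- A symmetric matrix `H ∈ ℝ^{n×n}` is `μc`-incoherent if it has an
eigendecomposition `H = Q Λ Qᵀ` (`Q` orthogonal, `Λ` diagonal) with
`|Q i j| ≤ μc / √n` for all `i, j`. -/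
def IncoherentH {n : ℕ} (H : Matrix (Fin n) (Fin n) ℝ) (μc : ℝ) : Prop :=
  ∃ Q Λ : Matrix (Fin n) (Fin n) ℝ,
    Q * Qᵀ = 1 ∧ (∀ i j, i ≠ j → Λ i j = 0) ∧ H = Q * Λ * Qᵀ ∧
    ∀ i j, |Q i j| ≤ μc / Real.sqrt n

namespace LDLIncoherentAux

variable {n : ℕ} (Q : Matrix (Fin n) (Fin n) ℝ)

/-- conjugation of a diagonal matrix by `Q`. -/
noncomputable def Mq (f : Fin n → ℝ) : Matrix (Fin n) (Fin n) ℝ :=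
  Q * Matrix.diagonal f * Qᵀ

lemma Mq_mul (hQ' : Qᵀ * Q = 1) (f g : Fin n → ℝ) :
    Mq Q f * Mq Q g = Mq Q (fun l => f l * g l) := by
  unfold Mq
  simp only [Matrix.mul_assoc]
  rw [← Matrix.mul_assoc Qᵀ Q, hQ', Matrix.one_mul,
    ← Matrix.mul_assoc (Matrix.diagonal f) (Matrix.diagonal g),
    Matrix.diagonal_mul_diagonal]

lemma Mq_transpose (f : Fin n → ℝ) : (Mq Q f)ᵀ = Mq Q f := by
  unfold Mq
  rw [Matrix.transpose_mul, Matrix.transpose_mul, Matrix.diagonal_transpose,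
    Matrix.transpose_transpose, Matrix.mul_assoc]

lemma Mq_trace (hQ' : Qᵀ * Q = 1) (f : Fin n → ℝ) :
    Matrix.trace (Mq Q f) = ∑ l, f l := by
  unfold Mq
  rw [Matrix.trace_mul_cycle, hQ', Matrix.one_mul, Matrix.trace_diagonal]

lemma Mq_apply_diag (f : Fin n → ℝ) (k : Fin n) :
    Mq Q f k k = ∑ l, f l * Q k l ^ 2 := by
  unfold Mq
  rw [Matrix.mul_apply]
  refine Finset.sum_congr rfl fun l _ => ?_
  rw [Matrix.mul_diagonal, Matrix.transpose_apply]
  ring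

/-- The key inequality for a fixed regularization `ε > 0`. -/
lemma key (μc : ℝ) (hQ : Q * Qᵀ = 1) (hQ' : Qᵀ * Q = 1)
    (hQb : ∀ i j, |Q i j| ≤ μc / Real.sqrt n)
    (lam : Fin n → ℝ) (hlam : ∀ l, 0 ≤ lam l)
    (A : Matrix (Fin n) (Fin n) ℝ) (hA : A * Aᵀ = Mq Q lam)
    (ε : ℝ) (hε : 0 < ε) :
    ∑ k, (A k k) ^ 2 ≤ μc ^ 2 / n * (∑ l, Real.sqrt (lam l + ε)) ^ 2 := by
  set g : Fin n → ℝ := fun l => Real.sqrt (lam l + ε) with hg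
  have hgpos : ∀ l, 0 < g l := fun l => Real.sqrt_pos.mpr (by linarith [hlam l])
  set r : Fin n → ℝ := fun l => Real.sqrt (g l) with hr
  have hrr : ∀ l, r l * r l = g l := fun l => Real.mul_self_sqrt (hgpos l).le
  set h : Fin n → ℝ := fun l => r l / g l with hh
  set P : Matrix (Fin n) (Fin n) ℝ := Mq Q r with hP
  set B : Matrix (Fin n) (Fin n) ℝ := Mq Q h * A with hB
  have hPB : P * B = A := by
    rw [hP, hB, ← Matrix.mul_assoc, Mq_mul Q hQ']
    have : (fun l => r l * h l) = fun _ => (1 : ℝ) := by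
      funext l
      show r l * (r l / g l) = 1
      rw [← mul_div_assoc, hrr l, div_self (hgpos l).ne']
    rw [this]
    unfold Mq
    rw [Matrix.diagonal_one, Matrix.mul_one, hQ, Matrix.one_mul]
  have hQsq : ∀ i j, Q i j ^ 2 ≤ μc ^ 2 / n := by
    intro i j
    have h1 : |Q i j| ^ 2 ≤ (μc / Real.sqrt n) ^ 2 :=
      pow_le_pow_left₀ (abs_nonneg _) (hQb i j) 2
    rwa [sq_abs, div_pow, Real.sq_sqrt (Nat.cast_nonneg n)] at h1
  set T : ℝ := ∑ l, g l with hT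
  have hTnonneg : 0 ≤ T := Finset.sum_nonneg fun l _ => (hgpos l).le
  -- bound on row sums of squares of P
  have hProw : ∀ k, (∑ j, P k j ^ 2) ≤ μc ^ 2 / n * T := by
    intro k
    have hPsymm : Pᵀ = P := by rw [hP]; exact Mq_transpose Q r
    have h1 : (∑ j, P k j ^ 2) = (P * Pᵀ) k k := by
      rw [Matrix.mul_apply]
      refine (Finset.sum_congr rfl fun j _ => ?_).symm
      rw [Matrix.transpose_apply]
      ring
    rw [h1, hPsymm, hP, Mq_mul Q hQ']
    have h2 : (fun l => r l * r l) = g := funext hrr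
    rw [h2, Mq_apply_diag]
    calc ∑ l, g l * Q k l ^ 2 ≤ ∑ l, g l * (μc ^ 2 / n) :=
          Finset.sum_le_sum fun l _ =>
            mul_le_mul_of_nonneg_left (hQsq k l) (hgpos l).le
      _ = μc ^ 2 / n * T := by rw [hT, Finset.mul_sum]; exact Finset.sum_congr rfl fun l _ => mul_comm _ _
  -- column sums of squares of B
  have hBcol : ∀ k, (∑ j, B j k ^ 2) = (Bᵀ * B) k k := by
    intro k
    rw [Matrix.mul_apply]
    refine (Finset.sum_congr rfl fun j _ => ?_).symm
    rw [Matrix.transpose_apply]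
    ring
  have hBcolnn : ∀ k, 0 ≤ (Bᵀ * B) k k := by
    intro k
    rw [← hBcol]
    exact Finset.sum_nonneg fun j _ => sq_nonneg _
  have hBtrace : Matrix.trace (Bᵀ * B) ≤ T := by
    have hBt : Bᵀ = Aᵀ * Mq Q h := by
      rw [hB, Matrix.transpose_mul, Mq_transpose]
    have e1 : Bᵀ * B = Aᵀ * (Mq Q (fun l => h l * h l) * A) := by
      rw [hBt, hB, Matrix.mul_assoc, ← Matrix.mul_assoc (Mq Q h), Mq_mul Q hQ']
    have e2 : Matrix.trace (Bᵀ * B) = Matrix.trace (Mq Q (fun l => h l * h l) * (A * Aᵀ)) := by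
      rw [e1, Matrix.trace_mul_comm, Matrix.mul_assoc]
    rw [e2, hA, Mq_mul Q hQ', Mq_trace Q hQ']
    refine Finset.sum_le_sum fun l _ => ?_
    have hgl := hgpos l
    have hpos : (0:ℝ) < lam l + ε := by linarith [hlam l]
    have hgsq : g l * g l = lam l + ε := Real.mul_self_sqrt hpos.le
    have hhl : h l * h l = (lam l + ε)⁻¹ * g l := by
      show (r l / g l) * (r l / g l) = (lam l + ε)⁻¹ * g l
      rw [div_mul_div_comm, hrr l, hgsq, div_eq_mul_inv, mul_comm]
    show h l * h l * lam l ≤ g l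
    rw [hhl]
    have hle1 : (lam l + ε)⁻¹ * lam l ≤ 1 := by
      rw [← div_eq_inv_mul]
      exact div_le_one_of_le₀ (by linarith) hpos.le
    nlinarith [hgl, hle1, hlam l, inv_nonneg.mpr hpos.le]
  -- put it together
  calc ∑ k, (A k k) ^ 2
      ≤ ∑ k, (μc ^ 2 / n * T) * (Bᵀ * B) k k := by
        refine Finset.sum_le_sum fun k _ => ?_
        have hAk : A k k = ∑ j, P k j * B j k := by rw [← hPB, Matrix.mul_apply]
        have hCS := Finset.sum_mul_sq_le_sq_mul_sq Finset.univ (fun j => P k j) (fun j => B j k)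
        rw [← hAk] at hCS
        calc (A k k) ^ 2 ≤ (∑ j, P k j ^ 2) * (∑ j, B j k ^ 2) := hCS
          _ ≤ (μc ^ 2 / n * T) * (Bᵀ * B) k k := by
              rw [hBcol k]
              exact mul_le_mul_of_nonneg_right (hProw k) (hBcolnn k)
    _ = (μc ^ 2 / n * T) * Matrix.trace (Bᵀ * B) := by
        simp only [Matrix.trace, Matrix.diag, Finset.mul_sum]
    _ ≤ (μc ^ 2 / n * T) * T := by
        refine mul_le_mul_of_nonneg_left hBtrace ?_
        exact mul_nonneg (div_nonneg (sq_nonneg _) (Nat.cast_nonneg n)) hTnonneg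
    _ = μc ^ 2 / n * T ^ 2 := by ring

end LDLIncoherentAux

open LDLIncoherentAux in
/-- Let `H` be a `μ`-incoherent positive semidefinite symmetric
matrix with LDL decomposition `H = (Ù + I) D (Ù + I)ᵀ`, where `Ù` is strictly
upper triangular and `D` is a nonnegative diagonal matrix.  Then
`tr D ≤ (μ²/n) · tr(H^{1/2})²`. -/
theorem trace_LDL_diag_le_of_incoherent {n : ℕ} (μc : ℝ)
    (H Ugrave D : Matrix (Fin n) (Fin n) ℝ)
    (hH : H.PosSemidef) (hinc : IncoherentH H μc)
    (hUgrave : ∀ i j : Fin n, j ≤ i → Ugrave i j = 0)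
    (hDdiag : ∀ i j, i ≠ j → D i j = 0) (hDnonneg : ∀ i, 0 ≤ D i i)
    (hLDL : H = (Ugrave + 1) * D * (Ugrave + 1)ᵀ) :
    Matrix.trace D ≤ μc ^ 2 / n * (Matrix.trace ((hH.1.eigenvectorUnitary : Matrix (Fin n) (Fin n) ℝ) *
      diagonal (Real.sqrt ∘ hH.1.eigenvalues) *
      (star hH.1.eigenvectorUnitary : Matrix (Fin n) (Fin n) ℝ))) ^ 2 := by
  obtain ⟨Q, Λ, hQ, hΛoff, hHdec, hQb⟩ := hinc
  have hQ' : Qᵀ * Q = 1 := mul_eq_one_comm.mp hQ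
  set lam : Fin n → ℝ := fun l => Λ l l with hlamdef
  have hΛ : Λ = Matrix.diagonal lam := by
    ext i j
    by_cases hij : i = j
    · subst hij; simp [Matrix.diagonal_apply_eq, lam]
    · rw [hΛoff i j hij, Matrix.diagonal_apply_ne _ hij]
  have hHMq : H = Mq Q lam := by rw [hHdec, hΛ]; rfl
  -- lam is nonnegative
  have hlam : ∀ l, 0 ≤ lam l := by
    intro l
    have hpsd : (Qᵀ * H * Q).PosSemidef := by
      have := hH.conjTranspose_mul_mul_same Q
      rwa [Matrix.conjTranspose_eq_transpose_of_trivial] at this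
    have hΛeq : Qᵀ * H * Q = Λ := by
      rw [hHdec]
      calc Qᵀ * (Q * Λ * Qᵀ) * Q = (Qᵀ * Q) * Λ * (Qᵀ * Q) := by
            simp only [Matrix.mul_assoc]
        _ = Λ := by rw [hQ']; simp
    have h2 := hpsd.dotProduct_mulVec_nonneg (Pi.single l 1)
    rw [hΛeq] at h2
    simpa [dotProduct, Matrix.mulVec, Pi.single_apply, Finset.sum_ite_eq,
      dotProduct_single] using h2
  -- identify the square root
  have hsqrt : ((hH.1.eigenvectorUnitary : Matrix (Fin n) (Fin n) ℝ) *
      diagonal (Real.sqrt ∘ hH.1.eigenvalues) *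
      (star hH.1.eigenvectorUnitary : Matrix (Fin n) (Fin n) ℝ)) = Mq Q (fun l => Real.sqrt (lam l)) := by
    have e1 : ((hH.1.eigenvectorUnitary : Matrix (Fin n) (Fin n) ℝ) *
      diagonal (Real.sqrt ∘ hH.1.eigenvalues) *
      (star hH.1.eigenvectorUnitary : Matrix (Fin n) (Fin n) ℝ)) = hH.1.cfc Real.sqrt := by
      simp [Matrix.IsHermitian.cfc, Function.comp_def, Unitary.conjStarAlgAut_apply]
    rw [e1, ← Matrix.IsHermitian.cfc_eq]
    rw [← cfcₙ_eq_cfc (hf := Real.continuous_sqrt.continuousOn) (hf0 := Real.sqrt_zero)]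
    open scoped MatrixOrder in
    refine (CFC.sqrt_eq_real_sqrt H (Matrix.nonneg_iff_posSemidef.mpr hH)).symm.trans
      (CFC.sqrt_unique (b := Mq Q (fun l => Real.sqrt (lam l))) ?_
        (Matrix.nonneg_iff_posSemidef.mpr ?_))
    rotate_left
    · unfold Mq
      have hd : (Matrix.diagonal (fun l => Real.sqrt (lam l))).PosSemidef :=
        Matrix.PosSemidef.diagonal fun l => Real.sqrt_nonneg _
      have := hd.mul_mul_conjTranspose_same Q
      rwa [Matrix.conjTranspose_eq_transpose_of_trivial] at this
    · rw [Mq_mul Q hQ']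
      have : (fun l => Real.sqrt (lam l) * Real.sqrt (lam l)) = lam := by
        funext l; exact Real.mul_self_sqrt (hlam l)
      rw [this, ← hHMq]
  have htr : Matrix.trace ((hH.1.eigenvectorUnitary : Matrix (Fin n) (Fin n) ℝ) *
      diagonal (Real.sqrt ∘ hH.1.eigenvalues) *
      (star hH.1.eigenvectorUnitary : Matrix (Fin n) (Fin n) ℝ)) = ∑ l, Real.sqrt (lam l) := by
    rw [hsqrt, Mq_trace Q hQ']
  -- the matrix A with A * Aᵀ = H and A k k = √(D k k)
  set A : Matrix (Fin n) (Fin n) ℝ :=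
    (Ugrave + 1) * Matrix.diagonal (fun i => Real.sqrt (D i i)) with hAdef
  have hDd : D = Matrix.diagonal (fun i => D i i) := by
    ext i j
    by_cases hij : i = j
    · subst hij; simp [Matrix.diagonal_apply_eq]
    · rw [hDdiag i j hij, Matrix.diagonal_apply_ne _ hij]
  have hAA : A * Aᵀ = Mq Q lam := by
    rw [hAdef, Matrix.transpose_mul, Matrix.diagonal_transpose, ← Matrix.mul_assoc,
      Matrix.mul_assoc _ _ (Matrix.diagonal fun i => Real.sqrt (D i i)),
      Matrix.diagonal_mul_diagonal]
    have : (fun i => Real.sqrt (D i i) * Real.sqrt (D i i)) = fun i => D i i := by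
      funext i; exact Real.mul_self_sqrt (hDnonneg i)
    rw [this, ← hDd, ← hHMq, ← hLDL]
  have hAkk : ∀ k, A k k = Real.sqrt (D k k) := by
    intro k
    rw [hAdef, Matrix.mul_diagonal, Matrix.add_apply, hUgrave k k le_rfl,
      Matrix.one_apply_eq, zero_add, one_mul]
  have htrD : Matrix.trace D = ∑ k, (A k k) ^ 2 := by
    rw [Matrix.trace]
    refine Finset.sum_congr rfl fun k _ => ?_
    rw [hAkk k, Real.sq_sqrt (hDnonneg k)]
    rfl
  -- use the key lemma for each ε > 0, then let ε → 0
  have hkey : ∀ ε > (0:ℝ),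
      Matrix.trace D ≤ μc ^ 2 / n * (∑ l, Real.sqrt (lam l + ε)) ^ 2 := by
    intro ε hε
    rw [htrD]
    exact key Q μc hQ hQ' hQb lam hlam A hAA ε hε
  have hcont : Continuous (fun ε : ℝ => μc ^ 2 / n * (∑ l, Real.sqrt (lam l + ε)) ^ 2) := by
    refine continuous_const.mul (Continuous.pow ?_ 2)
    exact continuous_finset_sum _ fun l _ =>
      Real.continuous_sqrt.comp (continuous_const.add continuous_id)
  have htend : Filter.Tendsto (fun ε : ℝ => μc ^ 2 / n * (∑ l, Real.sqrt (lam l + ε)) ^ 2)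
      (nhdsWithin 0 (Set.Ioi 0)) (nhds (μc ^ 2 / n * (∑ l, Real.sqrt (lam l + 0)) ^ 2)) :=
    hcont.continuousAt.continuousWithinAt
  have hfinal : Matrix.trace D ≤ μc ^ 2 / n * (∑ l, Real.sqrt (lam l + 0)) ^ 2 := by
    refine ge_of_tendsto htend ?_
    exact eventually_nhdsWithin_of_forall fun ε hε => hkey ε hε
  simpa [htr] using hfinal
end

section
/- Let H ∈ ℝ^{n×n} be symmetric positive definite and let α > 0 satisfy α ≥ e_k^T H^{1/2} e_k for all k = 1, …, n. Define Σ_0 = 0 and, for k = 1, …, n, Σ_k = (I − α^{-1} e_k e_k^T H^{1/2}) Σ_{k−1} (I − α^{-1} H^{1/2} e_k e_k^T) + e_k e_k^T. Then Σ_n ⪯ α H^{−1/2}, and consequently tr(H Σ_n) ≤ α · tr(H^{1/2}). -/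
open Matrix

section OldSqrt

open scoped ComplexOrder

/-- The old Mathlib `Matrix.PosSemidef.sqrt` (removed upstream), with its original definition. -/
noncomputable def Matrix.PosSemidef.sqrt {n 𝕜 : Type*} [Fintype n] [DecidableEq n] [RCLike 𝕜]
    {A : Matrix n n 𝕜} (hA : A.PosSemidef) : Matrix n n 𝕜 :=
  hA.isHermitian.eigenvectorUnitary.1 * diagonal ((↑) ∘ (√·) ∘ hA.isHermitian.eigenvalues) *
    (star hA.isHermitian.eigenvectorUnitary : Matrix n n 𝕜)

end OldSqrt

lemma oldsqrt_psd {n : ℕ} {A : Matrix (Fin n) (Fin n) ℝ} (hA : A.PosSemidef) :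
    hA.sqrt.PosSemidef := by
  have hD : (diagonal ((↑) ∘ (√·) ∘ hA.isHermitian.eigenvalues) :
      Matrix (Fin n) (Fin n) ℝ).PosSemidef :=
    posSemidef_diagonal_iff.mpr fun i => by simp [Real.sqrt_nonneg]
  have h := hD.mul_mul_conjTranspose_same (hA.isHermitian.eigenvectorUnitary.1)
  unfold Matrix.PosSemidef.sqrt
  rw [star_eq_conjTranspose]
  exact h

lemma oldsqrt_mul_self {n : ℕ} {A : Matrix (Fin n) (Fin n) ℝ} (hA : A.PosSemidef) :
    hA.sqrt * hA.sqrt = A := by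
  unfold Matrix.PosSemidef.sqrt
  conv_rhs => rw [hA.isHermitian.spectral_theorem]
  rw [Unitary.conjStarAlgAut_apply]
  have hu := Unitary.star_mul_self_of_mem hA.isHermitian.eigenvectorUnitary.2
  simp only [mul_assoc]
  rw [← mul_assoc (star (hA.isHermitian.eigenvectorUnitary : Matrix (Fin n) (Fin n) ℝ)), hu, one_mul, ← mul_assoc (diagonal _), diagonal_mul_diagonal]
  congr 3
  funext i
  simp [Real.mul_self_sqrt (hA.eigenvalues_nonneg i)]

lemma psd_smul {n : ℕ} {M : Matrix (Fin n) (Fin n) ℝ} (hM : M.PosSemidef) {c : ℝ} (hc : 0 ≤ c) :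
    (c • M).PosSemidef := by
  constructor
  · show (c • M)ᴴ = c • M
    rw [Matrix.conjTranspose_smul, hM.1.eq, star_trivial]
  · intro x
    exact (hM.smul hc).2 x

lemma psd_diag {n : ℕ} {M : Matrix (Fin n) (Fin n) ℝ} (hM : M.PosSemidef) (i : Fin n) :
    0 ≤ M i i := by
  exact hM.diag_nonneg

lemma psd_trace {n : ℕ} {M : Matrix (Fin n) (Fin n) ℝ} (hM : M.PosSemidef) :
    0 ≤ M.trace := by
  exact Finset.sum_nonneg fun i _ => psd_diag hM i

lemma psd_trace_mul {n : ℕ} {A B : Matrix (Fin n) (Fin n) ℝ} (hA : A.PosSemidef)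
    (hB : B.PosSemidef) : 0 ≤ (A * B).trace := by
  set C := hA.sqrt
  have hAC : A = Cᴴ * C := by rw [(oldsqrt_psd hA).1.eq, oldsqrt_mul_self]
  rw [hAC]
  rw [mul_assoc, trace_mul_comm]
  exact psd_trace (hB.mul_mul_conjTranspose_same C)

lemma stdB_herm {n : ℕ} (k : Fin n) :
    (Matrix.single k k (1:ℝ))ᴴ = Matrix.single k k (1:ℝ) := by
  ext i j
  simp [conjTranspose_apply, Matrix.single, and_comm]

lemma stdB_psd {n : ℕ} (k : Fin n) : (Matrix.single k k (1:ℝ)).PosSemidef := by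
  have h := posSemidef_conjTranspose_mul_self (Matrix.single k k (1:ℝ))
  rwa [stdB_herm, Matrix.single_mul_single_same, mul_one] at h

lemma stdB_sand {n : ℕ} (k : Fin n) (Q : Matrix (Fin n) (Fin n) ℝ) :
    Matrix.single k k (1:ℝ) * Q * Matrix.single k k 1
      = Q k k • Matrix.single k k 1 := by
  ext i j
  by_cases hi : k = i <;> by_cases hj : k = j <;>
    simp_all [Matrix.mul_apply, Matrix.single, Finset.sum_ite_eq, ite_and]

lemma combine_aux {n : ℕ} (A D T E R : Matrix (Fin n) (Fin n) ℝ)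
    (h : A * D * Aᴴ = D - E - E + R) :
    D - (A * T * Aᴴ + E) = A * (D - T) * Aᴴ + (E - R) := by
  rw [mul_sub, sub_mul, h]; abel

/-- Let `H` be symmetric positive definite, and let `α > 0`
satisfy `α ≥ e_kᵀ H^{1/2} e_k` for all `k`.  Define `Σ_0 = 0` and
`Σ_k = (I − α⁻¹ e_k e_kᵀ H^{1/2}) Σ_{k−1} (I − α⁻¹ H^{1/2} e_k e_kᵀ) + e_k e_kᵀ`.
Then `Σ_n ⪯ α H^{−1/2}` (Loewner order), and consequently
`tr(H Σ_n) ≤ α · tr(H^{1/2})`. -/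
theorem sigma_recurrence_loewner_bound {n : ℕ} (α : ℝ)
    (H : Matrix (Fin n) (Fin n) ℝ) (hH : H.PosDef)
    (hα : 0 < α) (hαdiag : ∀ k : Fin n, hH.posSemidef.sqrt k k ≤ α)
    (S : ℕ → Matrix (Fin n) (Fin n) ℝ)
    (hS0 : S 0 = 0)
    (hSrec : ∀ k : Fin n,
      S (k + 1) =
        (1 - α⁻¹ • (Matrix.single k k 1 * hH.posSemidef.sqrt)) * S k *
            (1 - α⁻¹ • (hH.posSemidef.sqrt * Matrix.single k k 1)) +
          Matrix.single k k 1) :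
    (α • (hH.posSemidef.sqrt)⁻¹ - S n).PosSemidef ∧
    Matrix.trace (H * S n) ≤ α * Matrix.trace hH.posSemidef.sqrt := by
  classical
  set Q := hH.posSemidef.sqrt with hQdef
  have hQPsd : Q.PosSemidef := oldsqrt_psd hH.posSemidef
  have hQherm : Qᴴ = Q := hQPsd.1
  have hQQ : Q * Q = H := oldsqrt_mul_self hH.posSemidef
  have hdet : IsUnit Q.det := by
    have hdd : Q.det * Q.det = H.det := by rw [← Matrix.det_mul, hQQ]
    have hHd := hH.det_pos
    refine isUnit_iff_ne_zero.mpr fun h => ?_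
    rw [h, mul_zero] at hdd
    exact absurd hdd.symm (ne_of_gt hHd)
  have h1 : Q * Q⁻¹ = 1 := Matrix.mul_nonsing_inv _ hdet
  have h2 : Q⁻¹ * Q = 1 := Matrix.nonsing_inv_mul _ hdet
  have hQinvH : (Q⁻¹)ᴴ = Q⁻¹ := by rw [Matrix.conjTranspose_nonsing_inv, hQherm]
  have hQinvPsd : (Q⁻¹).PosSemidef := by
    have h := hQPsd.conjTranspose_mul_mul_same Q⁻¹
    rwa [hQinvH, h2, one_mul] at h
  have key : ∀ k : ℕ, k ≤ n → (α • Q⁻¹ - S k).PosSemidef := by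
    intro k
    induction k with
    | zero => intro _; rw [hS0, sub_zero]; exact psd_smul hQinvPsd hα.le
    | succ k ih =>
      intro hk1
      have hk : k < n := hk1
      have ihk := ih (le_of_lt hk)
      have hrec := hSrec ⟨k, hk⟩
      set E := Matrix.single (⟨k, hk⟩ : Fin n) (⟨k, hk⟩ : Fin n) (1:ℝ) with hE
      have hEH : Eᴴ = E := by rw [hE]; exact stdB_herm _
      have hEQE : E * Q * E = Q ⟨k, hk⟩ ⟨k, hk⟩ • E := by rw [hE]; exact stdB_sand _ Q
      set A := (1 : Matrix (Fin n) (Fin n) ℝ) - α⁻¹ • (E * Q) with hA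
      have hAH : Aᴴ = 1 - α⁻¹ • (Q * E) := by
        rw [hA, Matrix.conjTranspose_sub, Matrix.conjTranspose_one,
          Matrix.conjTranspose_smul, Matrix.conjTranspose_mul, hEH, hQherm, star_trivial]
      rw [← hAH] at hrec
      have e1 : (α⁻¹ • (E * Q)) * (α • Q⁻¹) = E := by
        rw [smul_mul_assoc, mul_smul_comm, smul_smul, inv_mul_cancel₀ hα.ne', one_smul,
          mul_assoc, h1, mul_one]
      have hmid : A * (α • Q⁻¹) = α • Q⁻¹ - E := by rw [hA, sub_mul, one_mul, e1]
      have e2 : (α • Q⁻¹) * (α⁻¹ • (Q * E)) = E := by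
        rw [smul_mul_assoc, mul_smul_comm, smul_smul, mul_inv_cancel₀ hα.ne', one_smul,
          ← mul_assoc, h2, one_mul]
      have e3 : E * (α⁻¹ • (Q * E)) = (Q ⟨k, hk⟩ ⟨k, hk⟩ * α⁻¹) • E := by
        rw [mul_smul_comm, ← mul_assoc, hEQE, smul_smul, mul_comm]
      have hexp : A * (α • Q⁻¹) * Aᴴ
          = α • Q⁻¹ - E - E + (Q ⟨k, hk⟩ ⟨k, hk⟩ * α⁻¹) • E := by
        rw [hmid, hAH, sub_mul, mul_sub, mul_sub, mul_one, mul_one, e2, e3]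
        abel
      have hkey : α • Q⁻¹ - S (k+1)
          = A * (α • Q⁻¹ - S k) * Aᴴ + ((1 : ℝ) - Q ⟨k, hk⟩ ⟨k, hk⟩ * α⁻¹) • E := by
        rw [sub_smul, one_smul, hrec]
        exact combine_aux A _ _ E _ hexp
      have hc : 0 ≤ (1 : ℝ) - Q ⟨k, hk⟩ ⟨k, hk⟩ * α⁻¹ := by
        have := hαdiag ⟨k, hk⟩
        have h3 : Q ⟨k, hk⟩ ⟨k, hk⟩ * α⁻¹ ≤ α * α⁻¹ :=
          mul_le_mul_of_nonneg_right this (inv_nonneg.mpr hα.le)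
        rw [mul_inv_cancel₀ hα.ne'] at h3
        linarith
      rw [hkey]
      exact (ihk.mul_mul_conjTranspose_same A).add (psd_smul (hE ▸ stdB_psd _) hc)
  have hD := key n le_rfl
  refine ⟨hD, ?_⟩
  have htr : 0 ≤ (H * (α • Q⁻¹ - S n)).trace := psd_trace_mul hH.posSemidef hD
  have hHQ : H * Q⁻¹ = Q := by rw [← hQQ, mul_assoc, h1, mul_one]
  rw [mul_sub, Matrix.mul_smul, hHQ, Matrix.trace_sub, Matrix.trace_smul, smul_eq_mul] at htr
  linarith
end

section
/- Let H ∈ ℝ^{n×n} be symmetric positive definite with LDL decomposition H = Ũ D Ũ^T, where Ũ is unit upper triangular and D is positive diagonal. Fix t ∈ {1, …, n} and Δ_{1:(t−1)} ∈ ℝ^{m×(t−1)}, and consider minimizing tr(Δ H Δ^T) over Δ_{t:n} ∈ ℝ^{m×(n−t+1)}, where Δ = [Δ_{1:(t−1)}, Δ_{t:n}]. The unique minimizer is Δ_{t:n} = −Δ_{1:(t−1)} H_{1:(t−1),t:n} (H_{t:n,t:n})^{−1} = −Δ_{1:(t−1)} Ũ_{1:(t−1),t:n} (Ũ_{t:n,t:n})^{−1},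 and its first column (the t-th column of Δ) equals −Δ_{1:(t−1)} Ũ_{1:(t−1),t}. Consequently, the OPTQ update, which quantizes the t-th column after exactly minimizing the proxy loss over the remaining columns, coincides with the LDLQ update ŵ_t = Q(w_t − (Ŵ − W)(Ũ − I)e_t). -/
open Matrix

namespace OPTQEquiv

variable {m n : ℕ}

/-- Column indices strictly before `t`. -/
abbrev Lo (t : Fin n) := {j : Fin n // j < t}

/-- Column indices `t` and after. -/
abbrev Hi (t : Fin n) := {j : Fin n // t ≤ j}

/-- The matrix `Δ = [Δ_{1:(t−1)}, Δ_{t:n}]` assembled from the fixed block `F`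
(columns before `t`) and the free block `X` (columns `t` onwards). -/
def emb (t : Fin n) (F : Matrix (Fin m) (Lo t) ℝ) (X : Matrix (Fin m) (Hi t) ℝ) :
    Matrix (Fin m) (Fin n) ℝ :=
  Matrix.of fun i j => if h : j < t then F i ⟨j, h⟩ else X i ⟨j, not_lt.mp h⟩

/-- The submatrix `M_{1:(t−1),t:n}`. -/
def subLoHi (t : Fin n) (M : Matrix (Fin n) (Fin n) ℝ) : Matrix (Lo t) (Hi t) ℝ :=
  M.submatrix Subtype.val Subtype.val

/-- The submatrix `M_{t:n,t:n}`. -/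
def subHiHi (t : Fin n) (M : Matrix (Fin n) (Fin n) ℝ) : Matrix (Hi t) (Hi t) ℝ :=
  M.submatrix Subtype.val Subtype.val

/-- The claimed minimizer `Δ_{t:n} = −Δ_{1:(t−1)} H_{1:(t−1),t:n} (H_{t:n,t:n})⁻¹`. -/
noncomputable def optqMin (t : Fin n) (H : Matrix (Fin n) (Fin n) ℝ)
    (F : Matrix (Fin m) (Lo t) ℝ) : Matrix (Fin m) (Hi t) ℝ :=
  -(F * subLoHi t H * (subHiHi t H)⁻¹)

def subLoLo (t : Fin n) (M : Matrix (Fin n) (Fin n) ℝ) : Matrix (Lo t) (Lo t) ℝ :=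
  M.submatrix Subtype.val Subtype.val

def subHiLo (t : Fin n) (M : Matrix (Fin n) (Fin n) ℝ) : Matrix (Hi t) (Lo t) ℝ :=
  M.submatrix Subtype.val Subtype.val

def eqv (t : Fin n) : Lo t ⊕ Hi t ≃ Fin n where
  toFun x := Sum.elim Subtype.val Subtype.val x
  invFun j := if h : j < t then Sum.inl ⟨j, h⟩ else Sum.inr ⟨j, le_of_not_gt h⟩
  left_inv x := by
    rcases x with ⟨j, h⟩ | ⟨j, h⟩
    · simp [h]
    · simp [not_lt.2 h]
  right_inv j := by by_cases h : j < t <;> simp [h]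

lemma emb_eq (t : Fin n) (F : Matrix (Fin m) (Lo t) ℝ) (X : Matrix (Fin m) (Hi t) ℝ) :
    emb t F X = (fromCols F X).submatrix id (eqv t).symm := by
  ext i j
  by_cases h : j < t <;> simp [emb, eqv, fromCols, h]

lemma submatrix_eqv (t : Fin n) (M : Matrix (Fin n) (Fin n) ℝ) :
    M.submatrix (eqv t) (eqv t) =
      fromBlocks (subLoLo t M) (subLoHi t M) (subHiLo t M) (subHiHi t M) := by
  ext (a | a) (b | b) <;> rfl

lemma trace_expand (t : Fin n) (H : Matrix (Fin n) (Fin n) ℝ)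
    (F : Matrix (Fin m) (Lo t) ℝ) (X : Matrix (Fin m) (Hi t) ℝ) :
    Matrix.trace (emb t F X * H * (emb t F X)ᵀ) =
      Matrix.trace (F * subLoLo t H * Fᵀ) + Matrix.trace (X * subHiLo t H * Fᵀ) +
      Matrix.trace (F * subLoHi t H * Xᵀ) + Matrix.trace (X * subHiHi t H * Xᵀ) := by
  have hH : H = (H.submatrix (eqv t) (eqv t)).submatrix (eqv t).symm (eqv t).symm := by
    simp
  have key : emb t F X * H * (emb t F X)ᵀ =
      fromCols F X * H.submatrix (eqv t) (eqv t) * (fromCols F X)ᵀ := by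
    rw [emb_eq]
    conv_lhs => rw [hH]
    rw [transpose_submatrix, submatrix_mul_equiv, submatrix_mul_equiv]
    rfl
  rw [key, submatrix_eqv, transpose_fromCols, fromCols_mul_fromBlocks,
    fromCols_mul_fromRows]
  simp only [Matrix.add_mul, Matrix.trace_add]
  abel

/-- Sums over `Fin n` of functions vanishing below `t` restrict to `Hi t`. -/
lemma sumHi (t : Fin n) (g : Fin n → ℝ) (hg : ∀ j, ¬ t ≤ j → g j = 0) :
    ∑ j, g j = ∑ a : Hi t, g a.1 := by
  classical
  rw [← Finset.sum_filter_of_ne (p := fun j => t ≤ j)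
    (fun x _ hx => by by_contra hc; exact hx (hg x hc))]
  exact Finset.sum_subtype _ (by simp) g

lemma subHiHi_posDef {H : Matrix (Fin n) (Fin n) ℝ} (hH : H.PosDef) (t : Fin n) :
    (subHiHi t H).PosDef := by
  refine PosDef.of_dotProduct_mulVec_pos (hH.1.submatrix _) fun x hx => ?_
  classical
  set y : Fin n → ℝ := fun j => if h : t ≤ j then x ⟨j, h⟩ else 0 with hy
  have hyne : y ≠ 0 := by
    obtain ⟨b, hb⟩ := Function.ne_iff.1 hx
    intro h0
    apply hb
    have := congrFun h0 b.1
    simpa [hy, b.2] using this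
  have hpos := hH.dotProduct_mulVec_pos hyne
  have hdot : dotProduct (star x) (subHiHi t H *ᵥ x) = dotProduct (star y) (H *ᵥ y) := by
    simp only [star_trivial, dotProduct]
    rw [sumHi t _ (fun j hj => by simp [hy, dif_neg hj])]
    refine Finset.sum_congr rfl fun a _ => ?_
    have hya : y a.1 = x a := dif_pos a.2
    rw [hya]
    congr 1
    simp only [mulVec, dotProduct, subHiHi, submatrix_apply]
    rw [sumHi t _ (fun j hj => by simp [hy, dif_neg hj])]
    exact Finset.sum_congr rfl fun b _ => by rw [show y b.1 = x b from dif_pos b.2]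
  rw [hdot]
  exact hpos

lemma trace_pos {t : Fin n} {C : Matrix (Hi t) (Hi t) ℝ} (hC : C.PosDef)
    {Y : Matrix (Fin m) (Hi t) ℝ} (hY : Y ≠ 0) :
    0 < Matrix.trace (Y * C * Yᵀ) := by
  classical
  have diag : ∀ i, (Y * C * Yᵀ) i i = dotProduct (star (Y i)) (C *ᵥ (Y i)) := by
    intro i
    simp only [star_trivial, Matrix.mul_apply, transpose_apply, dotProduct, mulVec,
      Finset.sum_mul, Finset.mul_sum]
    rw [Finset.sum_comm]
    exact Finset.sum_congr rfl fun a _ => Finset.sum_congr rfl fun b _ => by ring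
  have hex : ∃ i, Y i ≠ 0 := by
    by_contra h
    push_neg at h
    exact hY (by ext i a; exact congrFun (h i) a)
  obtain ⟨i₀, hi₀⟩ := hex
  rw [Matrix.trace]
  refine Finset.sum_pos' (fun i _ => ?_) ⟨i₀, Finset.mem_univ _, ?_⟩
  · rw [Matrix.diag_apply, diag i]
    exact hC.posSemidef.dotProduct_mulVec_nonneg (Y i)
  · rw [Matrix.diag_apply, diag i₀]
    exact hC.dotProduct_mulVec_pos hi₀

lemma quad_identity {H : Matrix (Fin n) (Fin n) ℝ} (hH : H.PosDef) (t : Fin n)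
    (F : Matrix (Fin m) (Lo t) ℝ) (Y : Matrix (Fin m) (Hi t) ℝ) :
    Matrix.trace (emb t F (optqMin t H F + Y) * H * (emb t F (optqMin t H F + Y))ᵀ) =
      Matrix.trace (emb t F (optqMin t H F) * H * (emb t F (optqMin t H F))ᵀ) +
        Matrix.trace (Y * subHiHi t H * Yᵀ) := by
  classical
  set A := subLoHi t H with hAdef
  set C := subHiHi t H with hCdef
  set X₀ := optqMin t H F with hX₀def
  have hCpd := subHiHi_posDef hH t
  have hCdet : C.det ≠ 0 := hCpd.det_pos.ne'
  have hCsym : Cᵀ = C := by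
    ext a b
    have := congrFun (congrFun hH.1 a.1) b.1
    simpa [conjTranspose_apply, hCdef, subHiHi] using this
  have hAlo : subHiLo t H = Aᵀ := by
    ext a b
    have := congrFun (congrFun hH.1 b.1) a.1
    simpa [conjTranspose_apply, subHiLo, hAdef, subLoHi] using this
  have hX₀C : X₀ * C = -(F * A) := by
    rw [hX₀def, optqMin, ← hAdef, ← hCdef, Matrix.neg_mul, Matrix.mul_assoc (F * A),
      Matrix.nonsing_inv_mul C (isUnit_iff_ne_zero.2 hCdet), Matrix.mul_one]
  have t1 : Matrix.trace (Y * Aᵀ * Fᵀ) = Matrix.trace (F * A * Yᵀ) := by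
    rw [← Matrix.trace_transpose (Y * Aᵀ * Fᵀ)]
    congr 1
    simp [Matrix.transpose_mul, Matrix.mul_assoc]
  have t1' : Matrix.trace (X₀ * Aᵀ * Fᵀ) = Matrix.trace (F * A * X₀ᵀ) := by
    rw [← Matrix.trace_transpose (X₀ * Aᵀ * Fᵀ)]
    congr 1
    simp [Matrix.transpose_mul, Matrix.mul_assoc]
  have t2 : Matrix.trace (X₀ * C * Yᵀ) = -Matrix.trace (F * A * Yᵀ) := by
    rw [hX₀C, Matrix.neg_mul, Matrix.trace_neg]
  have t3 : Matrix.trace (Y * C * X₀ᵀ) = -Matrix.trace (F * A * Yᵀ) := by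
    rw [← Matrix.trace_transpose (Y * C * X₀ᵀ)]
    have h : (Y * C * X₀ᵀ)ᵀ = X₀ * C * Yᵀ := by
      rw [Matrix.transpose_mul, Matrix.transpose_mul, Matrix.transpose_transpose,
        hCsym, ← Matrix.mul_assoc]
    rw [h, t2]
  rw [trace_expand, trace_expand, hAlo, ← hAdef, ← hCdef]
  simp only [Matrix.transpose_add, Matrix.add_mul, Matrix.mul_add, Matrix.trace_add]
  linarith [t1, t1', t2, t3]

lemma part1 {H : Matrix (Fin n) (Fin n) ℝ} (hH : H.PosDef) (t : Fin n)
    (F : Matrix (Fin m) (Lo t) ℝ) (X : Matrix (Fin m) (Hi t) ℝ) (hX : X ≠ optqMin t H F) :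
    Matrix.trace (emb t F (optqMin t H F) * H * (emb t F (optqMin t H F))ᵀ) <
      Matrix.trace (emb t F X * H * (emb t F X)ᵀ) := by
  have h := quad_identity hH t F (X - optqMin t H F)
  have hxx : optqMin t H F + (X - optqMin t H F) = X := by abel
  rw [hxx] at h
  rw [h]
  have pos := trace_pos (subHiHi_posDef hH t) (sub_ne_zero.2 hX)
  linarith

section LDL

variable {t : Fin n} {H Utilde D : Matrix (Fin n) (Fin n) ℝ}

lemma entry_LDL (hDdiag : ∀ i j, i ≠ j → D i j = 0) (hLDL : H = Utilde * D * Utildeᵀ)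
    (a b : Fin n) : H a b = ∑ k, Utilde a k * D k k * Utilde b k := by
  rw [hLDL]
  simp only [Matrix.mul_apply, Matrix.transpose_apply]
  refine Finset.sum_congr rfl fun k _ => ?_
  congr 1
  exact Finset.sum_eq_single k (fun l _ hl => by rw [hDdiag l k hl, mul_zero]) (by simp)

lemma entry_hi (hUtri : ∀ i j : Fin n, j < i → Utilde i j = 0)
    (hDdiag : ∀ i j, i ≠ j → D i j = 0) (hLDL : H = Utilde * D * Utildeᵀ)
    (a : Fin n) (b : Hi t) :
    H a b.1 = ∑ k : Hi t, Utilde a k.1 * D k.1 k.1 * Utilde b.1 k.1 := by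
  rw [entry_LDL hDdiag hLDL a b.1]
  exact sumHi t _ (fun j hj => by
    rw [hUtri b.1 j (lt_of_lt_of_le (not_le.1 hj) b.2), mul_zero])

lemma hA_eq (hUtri : ∀ i j : Fin n, j < i → Utilde i j = 0)
    (hDdiag : ∀ i j, i ≠ j → D i j = 0) (hLDL : H = Utilde * D * Utildeᵀ) :
    subLoHi t H = subLoHi t Utilde * subHiHi t D * (subHiHi t Utilde)ᵀ := by
  ext a b
  rw [show (subLoHi t H) a b = H a.1 b.1 from rfl, entry_hi hUtri hDdiag hLDL a.1 b]
  simp only [Matrix.mul_apply, Matrix.transpose_apply, subLoHi, subHiHi, submatrix_apply]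
  refine Finset.sum_congr rfl fun k _ => ?_
  congr 1
  symm
  exact Finset.sum_eq_single k
    (fun l _ hl => by rw [hDdiag l.1 k.1 (fun h => hl (Subtype.ext h)), mul_zero])
    (by simp)

lemma hC_eq (hUtri : ∀ i j : Fin n, j < i → Utilde i j = 0)
    (hDdiag : ∀ i j, i ≠ j → D i j = 0) (hLDL : H = Utilde * D * Utildeᵀ) :
    subHiHi t H = subHiHi t Utilde * subHiHi t D * (subHiHi t Utilde)ᵀ := by
  ext a b
  rw [show (subHiHi t H) a b = H a.1 b.1 from rfl, entry_hi hUtri hDdiag hLDL a.1 b]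
  simp only [Matrix.mul_apply, Matrix.transpose_apply, subHiHi, submatrix_apply]
  refine Finset.sum_congr rfl fun k _ => ?_
  congr 1
  symm
  exact Finset.sum_eq_single k
    (fun l _ hl => by rw [hDdiag l.1 k.1 (fun h => hl (Subtype.ext h)), mul_zero])
    (by simp)

lemma detCU (hUtri : ∀ i j : Fin n, j < i → Utilde i j = 0)
    (hUdiag : ∀ i, Utilde i i = 1) : (subHiHi t Utilde).det = 1 := by
  rw [Matrix.det_of_upperTriangular
    (fun i j hij => hUtri i.1 j.1 (by exact_mod_cast hij))]
  simp [subHiHi, hUdiag]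

lemma detDH (hDdiag : ∀ i j, i ≠ j → D i j = 0) (hDpos : ∀ i, 0 < D i i) :
    (subHiHi t D).det ≠ 0 := by
  rw [Matrix.det_of_upperTriangular (M := subHiHi t D)
    (fun i j hij => hDdiag i.1 j.1 (Subtype.coe_ne_coe.mpr hij.ne'))]
  exact (Finset.prod_pos (fun k _ => hDpos k.1)).ne'

end LDL

/-- Let `H` be symmetric positive definite with LDL
decomposition `H = Ũ D Ũᵀ` (`Ũ` unit upper triangular, `D` positive diagonal).
Fix `t` and `Δ_{1:(t−1)} = F`, and minimize `tr(Δ H Δᵀ)` over the remaining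
columns `Δ_{t:n}`.  The unique minimizer is
`−F H_{1:(t−1),t:n} (H_{t:n,t:n})⁻¹ = −F Ũ_{1:(t−1),t:n} (Ũ_{t:n,t:n})⁻¹`, and
its first column (the `t`-th column of `Δ`) is `−F Ũ_{1:(t−1),t}`.  Consequently
the OPTQ update, which quantizes the `t`-th column after exactly minimizing the
proxy loss over the remaining columns, coincides with the LDLQ update
`ŵ_t = Q(w_t − (Ŵ − W)(Ũ − I) e_t)`. -/
theorem optq_step_eq_ldlq_step
    (H Utilde D : Matrix (Fin n) (Fin n) ℝ)
    (hH : H.PosDef)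
    (hUtri : ∀ i j : Fin n, j < i → Utilde i j = 0)
    (hUdiag : ∀ i, Utilde i i = 1)
    (hDdiag : ∀ i j, i ≠ j → D i j = 0) (hDpos : ∀ i, 0 < D i i)
    (hLDL : H = Utilde * D * Utildeᵀ)
    (t : Fin n) (F : Matrix (Fin m) (Lo t) ℝ) :
    (∀ X : Matrix (Fin m) (Hi t) ℝ, X ≠ optqMin t H F →
      Matrix.trace (emb t F (optqMin t H F) * H * (emb t F (optqMin t H F))ᵀ) <
        Matrix.trace (emb t F X * H * (emb t F X)ᵀ)) ∧
    optqMin t H F = -(F * subLoHi t Utilde * (subHiHi t Utilde)⁻¹) ∧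
    (∀ i : Fin m,
      optqMin t H F i ⟨t, le_refl t⟩ = -∑ j : Lo t, F i j * Utilde j t) ∧
    (∀ (Q : ℝ → ℝ) (W What : Matrix (Fin m) (Fin n) ℝ),
      (∀ (i : Fin m) (j : Lo t), What i j.1 - W i j.1 = F i j) →
      ∀ i : Fin m,
        Q (W i t + optqMin t H F i ⟨t, le_refl t⟩) =
          Q (W i t - ∑ j : Fin n, (What i j - W i j) * ((Utilde - 1) j t))) := by
  classical
  set BU := subLoHi t Utilde with hBU
  set CU := subHiHi t Utilde with hCU
  set DH := subHiHi t D with hDH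
  have hCUdet : CU.det ≠ 0 := by rw [hCU, detCU hUtri hUdiag]; norm_num
  have hDHdet : DH.det ≠ 0 := detDH hDdiag hDpos
  -- Part 2
  have p2 : optqMin t H F = -(F * BU * CU⁻¹) := by
    have hACinv : subLoHi t H * (subHiHi t H)⁻¹ = BU * CU⁻¹ := by
      rw [hA_eq hUtri hDdiag hLDL, hC_eq hUtri hDdiag hLDL, ← hBU, ← hCU, ← hDH,
        Matrix.mul_inv_rev, Matrix.mul_inv_rev]
      have h1 : CUᵀ * CUᵀ⁻¹ = 1 :=
        Matrix.mul_nonsing_inv _ (isUnit_iff_ne_zero.2 (by rwa [Matrix.det_transpose]))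
      have h2 : DH * DH⁻¹ = 1 := Matrix.mul_nonsing_inv _ (isUnit_iff_ne_zero.2 hDHdet)
      calc BU * DH * CUᵀ * (CUᵀ⁻¹ * (DH⁻¹ * CU⁻¹))
          = BU * (DH * ((CUᵀ * CUᵀ⁻¹) * (DH⁻¹ * CU⁻¹))) := by
            simp only [Matrix.mul_assoc]
        _ = BU * CU⁻¹ := by
            rw [h1, Matrix.one_mul, ← Matrix.mul_assoc DH DH⁻¹, h2, Matrix.one_mul]
    rw [optqMin, Matrix.mul_assoc, hACinv, ← Matrix.mul_assoc]
  -- Part 3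
  set t₀ : Hi t := ⟨t, le_refl t⟩ with ht₀
  have hinv : ∀ k : Hi t, CU⁻¹ k t₀ = (1 : Matrix (Hi t) (Hi t) ℝ) k t₀ := by
    intro k
    have h1 : CU⁻¹ * CU = 1 := Matrix.nonsing_inv_mul _ (isUnit_iff_ne_zero.2 hCUdet)
    calc CU⁻¹ k t₀ = (CU⁻¹ * CU) k t₀ := by
          rw [Matrix.mul_apply]
          rw [Finset.sum_eq_single t₀
            (fun l _ hl => by
              rw [show CU l t₀ = Utilde l.1 t from rfl,
                hUtri l.1 t (lt_of_le_of_ne l.2 (fun h => hl (Subtype.ext h.symm))), mul_zero])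
            (by simp)]
          rw [show CU t₀ t₀ = Utilde t t from rfl, hUdiag, mul_one]
      _ = (1 : Matrix (Hi t) (Hi t) ℝ) k t₀ := by rw [h1]
  have p3 : ∀ i : Fin m,
      optqMin t H F i t₀ = -∑ j : Lo t, F i j * Utilde j t := by
    intro i
    rw [p2]
    simp only [Matrix.neg_apply, neg_inj]
    rw [Matrix.mul_apply]
    rw [Finset.sum_congr rfl (fun k _ => by rw [hinv k])]
    rw [← Matrix.mul_apply, Matrix.mul_one, Matrix.mul_apply]
    rfl
  refine ⟨fun X hX => part1 hH t F X hX, p2, p3, ?_⟩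
  -- Part 4
  intro Q W What hF i
  congr 1
  rw [p3 i]
  have hsum : ∑ j : Fin n, (What i j - W i j) * ((Utilde - 1) j t)
      = ∑ j : Lo t, F i j * Utilde j t := by
    have hzero : ∀ j : Fin n, ¬ j < t → (What i j - W i j) * ((Utilde - 1) j t) = 0 := by
      intro j hj
      rcases eq_or_lt_of_le (not_lt.1 hj) with h | h
      · have h0 : (Utilde - 1) j t = 0 := by
          cases h
          simp [Matrix.sub_apply, hUdiag, Matrix.one_apply_eq]
        rw [h0, mul_zero]
      · have h0 : (Utilde - 1) j t = 0 := by
          simp [Matrix.sub_apply, hUtri j t h, Matrix.one_apply_ne h.ne']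
        rw [h0, mul_zero]
    rw [← Finset.sum_filter_of_ne (p := fun j => j < t)
      (fun x _ hx => by by_contra hc; exact hx (hzero x hc))]
    rw [Finset.sum_subtype (p := fun j => j < t) _ (by simp) (fun j => (What i j - W i j) * ((Utilde - 1) j t))]
    refine Finset.sum_congr rfl fun j _ => ?_
    rw [hF i j]
    simp [Matrix.sub_apply, Matrix.one_apply_ne (ne_of_lt j.2)]
  rw [hsum, sub_eq_add_neg]


end OPTQEquiv
end
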